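/- (Conservativity over minimal logic) For every formula A of the language L⊥ (built from propositional variables and ⊥ using ∧, ∨, → only, with no occurrence of ⊃): if ⊢_{⊥w} A in the system S⊥w, then ⊢_j A in Johansson's minimal propositional logic MPC. -/
import Mathlib


/-- Formulas of the language L_{⊥,⊃}. -/
inductive Formula : Type
  | var : ℕ → Formula
  | bot : Formula
  | and : Formula → Formula → Formula
  | or  : Formula → Formula → Formula
  | imp : Formula → Formula → Formula
  | sup : Formula → Formula → Formula

/-- Formulas of the ⊃-free language L⊥ of minimal logic. -/
inductive MFormula : Type
  | var : ℕ → MFormula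
  | bot : MFormula
  | and : MFormula → MFormula → MFormula
  | or  : MFormula → MFormula → MFormula
  | imp : MFormula → MFormula → MFormula

/-- The inclusion of L⊥ into L_{⊥,⊃}. -/
def MFormula.toF : MFormula → Formula
  | .var p => .var p
  | .bot => .bot
  | .and A B => .and A.toF B.toF
  | .or A B => .or A.toF B.toF
  | .imp A B => .imp A.toF B.toF

/-- Theoremhood ⊢_{⊥w} in the Hilbert system S⊥w. -/
inductive WDeriv : Formula → Prop
  | ax1 (A B : Formula) : WDeriv (A.imp (B.imp A))
  | ax2 (A B C : Formula) :
      WDeriv ((A.imp (B.imp C)).imp ((A.imp B).imp (A.imp C)))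
  | ax3 (A B : Formula) : WDeriv ((A.and B).imp A)
  | ax4 (A B : Formula) : WDeriv ((A.and B).imp B)
  | ax5 (A B C : Formula) :
      WDeriv ((C.imp A).imp ((C.imp B).imp (C.imp (A.and B))))
  | ax6 (A B : Formula) : WDeriv (A.imp (A.or B))
  | ax7 (A B : Formula) : WDeriv (B.imp (A.or B))
  | ax8 (A B C : Formula) :
      WDeriv ((A.imp C).imp ((B.imp C).imp ((A.or B).imp C)))
  | axM1 (A B : Formula) : WDeriv ((A.imp B).sup (A.sup B))
  | axM2 (A B C : Formula) :
      WDeriv ((A.sup (B.sup C)).imp ((A.sup B).sup (A.sup C)))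
  | axM3 (A B C : Formula) :
      WDeriv ((A.sup (B.imp C)).imp (B.imp (A.sup C)))
  | axM4 (A B C : Formula) :
      WDeriv ((A.imp (B.sup C)).imp (B.sup (A.imp C)))
  | axM5 (A B C : Formula) :
      WDeriv (((A.sup B).sup C).imp ((A.sup C).imp C))
  | axM6 (A B C : Formula) :
      WDeriv ((A.sup C).imp ((B.sup C).imp ((A.or B).sup C)))
  | axE (A : Formula) : WDeriv (Formula.bot.sup A)
  | mp {A B} : WDeriv A → WDeriv (A.sup B) → WDeriv B

/-- Theoremhood ⊢_j in Johansson's minimal propositional logic MPC,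
given by (Ax1)–(Ax8) and modus ponens for → in the language L⊥. -/
inductive MDeriv : MFormula → Prop
  | ax1 (A B : MFormula) : MDeriv (A.imp (B.imp A))
  | ax2 (A B C : MFormula) :
      MDeriv ((A.imp (B.imp C)).imp ((A.imp B).imp (A.imp C)))
  | ax3 (A B : MFormula) : MDeriv ((A.and B).imp A)
  | ax4 (A B : MFormula) : MDeriv ((A.and B).imp B)
  | ax5 (A B C : MFormula) :
      MDeriv ((C.imp A).imp ((C.imp B).imp (C.imp (A.and B))))
  | ax6 (A B : MFormula) : MDeriv (A.imp (A.or B))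
  | ax7 (A B : MFormula) : MDeriv (B.imp (A.or B))
  | ax8 (A B C : MFormula) :
      MDeriv ((A.imp C).imp ((B.imp C).imp ((A.or B).imp C)))
  | mp {A B} : MDeriv A → MDeriv (A.imp B) → MDeriv B

/-! ### Auxiliary development for conservativity -/

namespace Conserv

open MFormula

/-- Identity is derivable in MPC. -/
lemma mderiv_id (A : MFormula) : MDeriv (A.imp A) :=
  (MDeriv.ax1 A A).mp ((MDeriv.ax1 A (A.imp A)).mp (MDeriv.ax2 A (A.imp A) A))

/-- Derivability from a set of hypotheses in MPC. -/
inductive MC (Γ : Set MFormula) : MFormula → Prop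
  | hyp {B} : B ∈ Γ → MC Γ B
  | thm {B} : MDeriv B → MC Γ B
  | mp {A B} : MC Γ A → MC Γ (A.imp B) → MC Γ B

lemma MC.mono {Γ Δ : Set MFormula} (hΓΔ : Γ ⊆ Δ) {B} (h : MC Γ B) : MC Δ B := by
  induction h with
  | hyp h => exact MC.hyp (hΓΔ h)
  | thm h => exact MC.thm h
  | mp _ _ ih1 ih2 => exact ih1.mp ih2

lemma MC.of_empty {B} (h : MC ∅ B) : MDeriv B := by
  induction h with
  | hyp h => exact absurd h (Set.notMem_empty _)
  | thm h => exact h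
  | mp _ _ ih1 ih2 => exact ih1.mp ih2

/-- Deduction theorem for MPC. -/
lemma MC.deduction {Γ : Set MFormula} {A B : MFormula}
    (h : MC (insert A Γ) B) : MC Γ (A.imp B) := by
  induction h with
  | @hyp B h =>
    rcases h with h | h
    · subst h; exact MC.thm (mderiv_id _)
    · exact (MC.hyp h).mp (MC.thm (MDeriv.ax1 B A))
  | @thm B h => exact (MC.thm h).mp (MC.thm (MDeriv.ax1 B A))
  | @mp X B _ _ ih1 ih2 =>
    exact ih1.mp (ih2.mp (MC.thm (MDeriv.ax2 A X B)))

lemma MC.cut {Γ : Set MFormula} {A B : MFormula}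
    (hA : MC Γ A) (h : MC (insert A Γ) B) : MC Γ B :=
  hA.mp h.deduction

lemma MC.iUnion_mono {Γ : ℕ → Set MFormula} (hm : Monotone Γ) {B}
    (h : MC (⋃ n, Γ n) B) : ∃ n, MC (Γ n) B := by
  induction h with
  | hyp h =>
    obtain ⟨n, hn⟩ := Set.mem_iUnion.1 h
    exact ⟨n, MC.hyp hn⟩
  | thm h => exact ⟨0, MC.thm h⟩
  | mp _ _ ih1 ih2 =>
    obtain ⟨n, h1⟩ := ih1
    obtain ⟨m, h2⟩ := ih2
    exact ⟨max n m, (h1.mono (hm (le_max_left n m))).mp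
      (h2.mono (hm (le_max_right n m)))⟩

/-- Prime theories. -/
structure IsPrime (Δ : Set MFormula) : Prop where
  closed : ∀ {B}, MC Δ B → B ∈ Δ
  prime : ∀ {B C}, (B.or C) ∈ Δ → B ∈ Δ ∨ C ∈ Δ

lemma IsPrime.and_mem {Δ : Set MFormula} (h : IsPrime Δ) {B C : MFormula} :
    (B.and C) ∈ Δ ↔ B ∈ Δ ∧ C ∈ Δ := by
  constructor
  · intro hm
    exact ⟨h.closed ((MC.hyp hm).mp (MC.thm (MDeriv.ax3 B C))),
           h.closed ((MC.hyp hm).mp (MC.thm (MDeriv.ax4 B C)))⟩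
  · rintro ⟨hB, hC⟩
    have h1 : MC Δ (B.imp C) := (MC.hyp hC).mp (MC.thm (MDeriv.ax1 C B))
    have h2 : MC Δ (B.imp (B.and C)) :=
      h1.mp ((MC.thm (mderiv_id B)).mp (MC.thm (MDeriv.ax5 B C B)))
    exact h.closed ((MC.hyp hB).mp h2)

lemma IsPrime.or_mem {Δ : Set MFormula} (h : IsPrime Δ) {B C : MFormula} :
    (B.or C) ∈ Δ ↔ B ∈ Δ ∨ C ∈ Δ := by
  constructor
  · exact h.prime
  · rintro (hB | hB)
    · exact h.closed ((MC.hyp hB).mp (MC.thm (MDeriv.ax6 B C)))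
    · exact h.closed ((MC.hyp hB).mp (MC.thm (MDeriv.ax7 B C)))

/-- An injective coding of MFormula into ℕ. -/
def code : MFormula → ℕ
  | .var p => Nat.pair 0 p
  | .bot => Nat.pair 1 0
  | .and A B => Nat.pair 2 (Nat.pair (code A) (code B))
  | .or A B => Nat.pair 3 (Nat.pair (code A) (code B))
  | .imp A B => Nat.pair 4 (Nat.pair (code A) (code B))

lemma code_inj : ∀ (A B : MFormula), code A = code B → A = B := by
  intro A
  induction A with
  | var p =>
    intro B h
    cases B <;> simp only [code, Nat.pair_eq_pair] at h <;> try omega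
    rw [h.2]
  | bot =>
    intro B h
    cases B <;> simp only [code, Nat.pair_eq_pair] at h <;> try omega
    rfl
  | and A B ihA ihB =>
    intro C h
    cases C <;> simp only [code, Nat.pair_eq_pair] at h <;> try omega
    rw [ihA _ h.2.1, ihB _ h.2.2]
  | or A B ihA ihB =>
    intro C h
    cases C <;> simp only [code, Nat.pair_eq_pair] at h <;> try omega
    rw [ihA _ h.2.1, ihB _ h.2.2]
  | imp A B ihA ihB =>
    intro C h
    cases C <;> simp only [code, Nat.pair_eq_pair] at h <;> try omega
    rw [ihA _ h.2.1, ihB _ h.2.2]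

instance : Countable MFormula := Function.Injective.countable (fun A B h => code_inj A B h)
instance : Nonempty MFormula := ⟨.bot⟩

open Classical in
/-- Lindenbaum chain. -/
noncomputable def chain (e : ℕ → MFormula) (Γ₀ : Set MFormula) (A : MFormula) :
    ℕ → Set MFormula
  | 0 => Γ₀
  | n + 1 =>
      if MC (insert (e n) (chain e Γ₀ A n)) A then chain e Γ₀ A n
      else insert (e n) (chain e Γ₀ A n)

lemma chain_mono (e : ℕ → MFormula) (Γ₀ : Set MFormula) (A : MFormula) :
    Monotone (chain e Γ₀ A) := by
  apply monotone_nat_of_le_succ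
  intro n
  by_cases h : MC (insert (e n) (chain e Γ₀ A n)) A <;>
    simp [chain, h, Set.subset_insert]

lemma chain_not_deriv (e : ℕ → MFormula) {Γ₀ : Set MFormula} {A : MFormula}
    (h0 : ¬ MC Γ₀ A) : ∀ n, ¬ MC (chain e Γ₀ A n) A := by
  intro n
  induction n with
  | zero => exact h0
  | succ n ih =>
    by_cases h : MC (insert (e n) (chain e Γ₀ A n)) A
    · simp only [chain, if_pos h]; exact ih
    · simp only [chain, if_neg h]; exact h

/-- Lindenbaum's lemma for MPC. -/
lemma lindenbaum {Γ₀ : Set MFormula} {A : MFormula} (h0 : ¬ MC Γ₀ A) :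
    ∃ Δ : Set MFormula, Γ₀ ⊆ Δ ∧ IsPrime Δ ∧ A ∉ Δ := by
  obtain ⟨e, he⟩ := exists_surjective_nat MFormula
  set Δ : Set MFormula := ⋃ n, chain e Γ₀ A n with hΔ
  have hmono := chain_mono e Γ₀ A
  have hnd : ¬ MC Δ A := by
    intro h
    obtain ⟨n, hn⟩ := MC.iUnion_mono hmono h
    exact chain_not_deriv e h0 n hn
  have hsub : Γ₀ ⊆ Δ := Set.subset_iUnion (chain e Γ₀ A) 0
  -- key: if B ∉ Δ then insert B Δ derives A
  have hkey : ∀ B : MFormula, B ∉ Δ → MC (insert B Δ) A := by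
    intro B hB
    obtain ⟨n, rfl⟩ := he B
    by_cases h : MC (insert (e n) (chain e Γ₀ A n)) A
    · exact h.mono (Set.insert_subset_insert (Set.subset_iUnion (chain e Γ₀ A) n))
    · exfalso
      apply hB
      apply Set.mem_iUnion.2 ⟨n + 1, ?_⟩
      simp [chain, h]
  have hclosed : ∀ {B : MFormula}, MC Δ B → B ∈ Δ := by
    intro B hB
    by_contra hBmem
    exact hnd (hB.cut (hkey B hBmem))
  refine ⟨Δ, hsub, ⟨fun {B} => hclosed, ?_⟩, ?_⟩
  · intro B C hor
    by_contra hcon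
    push_neg at hcon
    have h1 : MC Δ (B.imp A) := (hkey B hcon.1).deduction
    have h2 : MC Δ (C.imp A) := (hkey C hcon.2).deduction
    have h3 : MC Δ ((B.or C).imp A) :=
      h2.mp (h1.mp (MC.thm (MDeriv.ax8 B C A)))
    exact hnd ((MC.hyp hor).mp h3)
  · intro hA
    exact hnd (MC.hyp hA)

/-! ### Kripke models for `S⊥w` -/

structure Model where
  W : Type
  le : W → W → Prop
  refl : ∀ w, le w w
  trans : ∀ {a b c}, le a b → le b c → le a c
  root : W
  root_le : ∀ w, le root w
  V : W → ℕ → Prop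
  Vb : W → Prop
  monoV : ∀ {w v p}, le w v → V w p → V v p
  monoVb : ∀ {w v}, le w v → Vb w → Vb v
  rootVb : ¬ Vb root

def Model.force (M : Model) : M.W → Formula → Prop
  | w, .var p => M.V w p
  | w, .bot => M.Vb w
  | w, .and A B => M.force w A ∧ M.force w B
  | w, .or A B => M.force w A ∨ M.force w B
  | w, .imp A B => ∀ v, M.le w v → M.force v A → M.force v B
  | w, .sup A B => M.force M.root A → M.force w B

lemma Model.persist (M : Model) {A : Formula} :
    ∀ {w v : M.W}, M.le w v → M.force w A → M.force v A := by
  induction A with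
  | var p => exact fun h => M.monoV h
  | bot => exact fun h => M.monoVb h
  | and A B ihA ihB => exact fun h hf => ⟨ihA h hf.1, ihB h hf.2⟩
  | or A B ihA ihB =>
    rintro w v h (hf | hf)
    · exact Or.inl (ihA h hf)
    · exact Or.inr (ihB h hf)
  | imp A B ihA ihB =>
    intro w v h hf u hu ha
    exact hf u (M.trans h hu) ha
  | sup A B ihA ihB =>
    intro w v h hf hr
    exact ihB h (hf hr)

/-- Soundness of `S⊥w` for rooted models. -/
lemma sound {D : Formula} (h : WDeriv D) (M : Model) :
    ∀ w : M.W, M.force w D := by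
  induction h with
  | ax1 A B =>
    intro w v _ ha u hu _
    exact M.persist hu ha
  | ax2 A B C =>
    intro w v _ h1 u hu h2 t ht ha
    exact h1 t (M.trans hu ht) ha t (M.refl t) (h2 t ht ha)
  | ax3 A B => intro w v _ hf; exact hf.1
  | ax4 A B => intro w v _ hf; exact hf.2
  | ax5 A B C =>
    intro w v _ h1 u hu h2 t ht hc
    exact ⟨h1 t (M.trans hu ht) hc, h2 t ht hc⟩
  | ax6 A B => intro w v _ ha; exact Or.inl ha
  | ax7 A B => intro w v _ hb; exact Or.inr hb
  | ax8 A B C =>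
    rintro w v _ h1 u hu h2 t ht (ha | hb)
    · exact h1 t (M.trans hu ht) ha
    · exact h2 t ht hb
  | axM1 A B =>
    intro w hab ha
    exact M.persist (M.root_le w) (hab M.root (M.refl _) ha)
  | axM2 A B C =>
    intro w v _ h1 hab ha
    exact h1 ha (hab ha)
  | axM3 A B C =>
    intro w v _ h1 u hu hb ha
    exact h1 ha u hu hb
  | axM4 A B C =>
    intro w v _ h1 hb u hu ha
    exact h1 u hu ha hb
  | axM5 A B C =>
    intro w v _ h1 u hu h2
    by_cases hra : M.force M.root A
    · exact h2 hra
    · exact M.persist hu (h1 (fun ha => absurd ha hra))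
  | axM6 A B C =>
    rintro w v _ h1 u hu h2 (ha | hb)
    · exact M.persist hu (h1 ha)
    · exact h2 hb
  | axE A =>
    intro w hbot
    exact absurd hbot M.rootVb
  | mp hA hAB ihA ihAB =>
    intro w
    exact ihAB w (ihA M.root)

/-! ### The canonical model -/

def PrimeW : Type := {Δ : Set MFormula // IsPrime Δ}

noncomputable def canModel : Model where
  W := Option PrimeW
  le a b :=
    match a, b with
    | none, _ => True
    | some Δ, some Δ' => Δ.1 ⊆ Δ'.1
    | some _, none => False
  refl w := by cases w <;> simp
  trans {a b c} hab hbc := by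
    cases a <;> cases b <;> cases c <;> simp_all
    exact hab.trans hbc
  root := none
  root_le w := by cases w <;> simp
  V w p :=
    match w with
    | none => False
    | some Δ => (MFormula.var p) ∈ Δ.1
  Vb w :=
    match w with
    | none => False
    | some Δ => MFormula.bot ∈ Δ.1
  monoV {w v p} h hw := by
    cases w <;> cases v <;> simp_all
    exact h hw
  monoVb {w v} h hw := by
    cases w <;> cases v <;> simp_all
    exact h hw
  rootVb := by simp

/-- Truth lemma at prime worlds. -/
lemma truth_lemma : ∀ (B : MFormula) (Δ : PrimeW),
    (canModel.force (some Δ) B.toF ↔ B ∈ Δ.1) := by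
  intro B
  induction B with
  | var p => intro Δ; exact Iff.rfl
  | bot => intro Δ; exact Iff.rfl
  | and B C ihB ihC =>
    intro Δ
    show (canModel.force (some Δ) B.toF ∧ canModel.force (some Δ) C.toF) ↔ _
    rw [ihB, ihC, Δ.2.and_mem]
  | or B C ihB ihC =>
    intro Δ
    show (canModel.force (some Δ) B.toF ∨ canModel.force (some Δ) C.toF) ↔ _
    rw [ihB, ihC, Δ.2.or_mem]
  | imp B C ihB ihC =>
    intro Δ
    constructor
    · intro hf
      apply Δ.2.closed
      by_contra hnd
      have hninsert : ¬ MC (insert B Δ.1) C := fun h => hnd h.deduction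
      obtain ⟨Δ', hsub, hprime, hC⟩ := lindenbaum hninsert
      have hle : canModel.le (some Δ) (some ⟨Δ', hprime⟩) :=
        (Set.subset_insert B Δ.1).trans hsub
      have hB : canModel.force (some ⟨Δ', hprime⟩) B.toF :=
        (ihB ⟨Δ', hprime⟩).2 (hsub (Set.mem_insert B Δ.1))
      have := (ihC ⟨Δ', hprime⟩).1 (hf _ hle hB)
      exact hC this
    · intro hm v hv hB
      cases v with
      | none => exact absurd hv (by simp [canModel])
      | some Δ' =>
        apply (ihC Δ').2
        apply Δ'.2.closed
        have hBm : B ∈ Δ'.1 := (ihB Δ').1 hB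
        have himp : B.imp C ∈ Δ'.1 := hv hm
        exact (MC.hyp hBm).mp (MC.hyp himp)

end Conserv

/-- Conservativity of S⊥w over minimal logic: for A in L⊥,
if ⊢_{⊥w} A then ⊢_j A. -/
theorem conservative_over_minimal (A : MFormula)
    (h : WDeriv A.toF) : MDeriv A := by
  by_contra hA
  have h0 : ¬ Conserv.MC ∅ A := fun hc => hA hc.of_empty
  obtain ⟨Δ, _, hprime, hAΔ⟩ := Conserv.lindenbaum h0
  have hforce := Conserv.sound h Conserv.canModel Conserv.canModel.root
  have hle : Conserv.canModel.le Conserv.canModel.root (some ⟨Δ, hprime⟩) :=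
    Conserv.canModel.root_le _
  have := Conserv.canModel.persist hle hforce
  exact hAΔ ((Conserv.truth_lemma A ⟨Δ, hprime⟩).1 this)
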